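/- arXiv:2403.00750 — 2 statements merged into one kernel-verified Lean document; each statement's English description precedes it below -/
import Mathlib

section
/- Let T be a finite tree rooted at a vertex r. Then for every vertex v of T, rho'(T_v) equals the sum over all children u of v of rho_e^o(T_u). -/
open scoped Classical

variable {V : Type*}

/-- Two edges `e₁, e₂` have a common edge in `H` if some edge of `H`, different from both,
joins an endvertex of `e₁` to an endvertex of `e₂`. -/
def HasCommonEdge (H : SimpleGraph V) (e₁ e₂ : Sym2 V) : Prop :=
  ∃ x y : V, x ∈ e₁ ∧ y ∈ e₂ ∧ H.Adj x y ∧ s(x, y) ≠ e₁ ∧ s(x, y) ≠ e₂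

/-- `S` is an edge open packing set of `H`. -/
def IsEOP (H : SimpleGraph V) (S : Set (Sym2 V)) : Prop :=
  S ⊆ H.edgeSet ∧ ∀ e₁ ∈ S, ∀ e₂ ∈ S, e₁ ≠ e₂ → ¬ HasCommonEdge H e₁ e₂

/-- The edge open packing number of `H`: the maximum cardinality of an EOP set of `H`. -/
noncomputable def eopNum (H : SimpleGraph V) : ℕ :=
  sSup {n | ∃ S : Set (Sym2 V), IsEOP H S ∧ S.ncard = n}

/-- `deg_S(x)`: the number of edges of `S` incident with `x`. -/
noncomputable def degS (S : Set (Sym2 V)) (x : V) : ℕ :=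
  {e ∈ S | x ∈ e}.ncard

/-- In the tree `T` rooted at `r`, the vertex `u` belongs to the subtree `T_v` (i.e. `u` is
`v` itself or a descendant of `v`) iff every walk from `u` to the root `r` passes through
`v`. -/
def InSubtree (T : SimpleGraph V) (r v u : V) : Prop :=
  ∀ p : T.Walk u r, v ∈ p.support

/-- The subtree `T_v` of the tree `T` rooted at `r`, induced by `v` together with all of its
descendants (realized as the subgraph of `T` on the same vertex set whose edges are exactly
the edges of `T` with both endvertices in `T_v`). -/
def subtree (T : SimpleGraph V) (r v : V) : SimpleGraph V where
  Adj a b := T.Adj a b ∧ InSubtree T r v a ∧ InSubtree T r v b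
  symm := ⟨by rintro a b ⟨h, ha, hb⟩; exact ⟨h.symm, hb, ha⟩⟩
  loopless := ⟨fun a h => T.irrefl h.1⟩

/-- `ρᶜ(H, v)`: the maximum cardinality of an EOP set `S` of `H` such that `deg_S(v) ≥ 1`
and every vertex joined to `v` by an edge of `S` has exactly one incident edge in `S`
(i.e. `v` is the center of a star of the subgraph induced by `S`); `0` if no such set
exists. -/
noncomputable def rhoC (H : SimpleGraph V) (v : V) : ℕ :=
  sSup {n | ∃ S : Set (Sym2 V), IsEOP H S ∧ 1 ≤ degS S v ∧
    (∀ u : V, s(v, u) ∈ S → degS S u = 1) ∧ S.ncard = n}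

/-- `ρˡ(H, v)`: the maximum cardinality of an EOP set `S` of `H` with `deg_S(v) = 1`
(i.e. `v` is a leaf of a star of the subgraph induced by `S`); `0` if no such set exists. -/
noncomputable def rhoL (H : SimpleGraph V) (v : V) : ℕ :=
  sSup {n | ∃ S : Set (Sym2 V), IsEOP H S ∧ degS S v = 1 ∧ S.ncard = n}

/-- `ρ'(H, v)`: the maximum cardinality of an EOP set `S` of `H` with `deg_S(v) = 0`. -/
noncomputable def rhoP (H : SimpleGraph V) (v : V) : ℕ :=
  sSup {n | ∃ S : Set (Sym2 V), IsEOP H S ∧ degS S v = 0 ∧ S.ncard = n}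

/-- `ρ''(H, v)`: the maximum cardinality of an EOP set `S` of `H` with `deg_S(x) = 0` for
every vertex `x` in the closed neighborhood of `v` in `H`. -/
noncomputable def rhoPP (H : SimpleGraph V) (v : V) : ℕ :=
  sSup {n | ∃ S : Set (Sym2 V), IsEOP H S ∧
    (∀ x : V, x = v ∨ H.Adj v x → degS S x = 0) ∧ S.ncard = n}

/-! ### Auxiliary geometric lemmas about trees and subtrees -/

section Aux
variable {T : SimpleGraph V} {r v : V}

private lemma path_eq (hT : T.IsTree) {a b : V} {p q : T.Walk a b} (hp : p.IsPath)
    (hq : q.IsPath) : p = q :=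
  (hT.existsUnique_path a b).unique hp hq

private lemma inSubtree_iff (hT : T.IsTree) {u : V} (p : T.Walk u r) (hp : p.IsPath) :
    InSubtree T r v u ↔ v ∈ p.support := by
  refine ⟨fun h => h p, fun hv w => ?_⟩
  have hbp : w.bypass = p := path_eq hT w.bypass_isPath hp
  exact w.support_bypass_subset (hbp ▸ hv)

private lemma inSubtree_trans {u x : V} (hvu : InSubtree T r v u) (hux : InSubtree T r u x) :
    InSubtree T r v x := fun w =>
  w.support_dropUntil_subset (hux w) (hvu (w.dropUntil u (hux w)))

private lemma child_dart (hT : T.IsTree) {u x : V} (hadj : T.Adj v u)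
    (hcu : InSubtree T r v u) (p : T.Walk x r) (hp : p.IsPath) (hu : u ∈ p.support) :
    ∃ d ∈ p.darts, d.toProd = (u, v) := by
  set q := p.dropUntil u hu with hqdef
  have hq : q.IsPath := hp.dropUntil hu
  have hv : v ∈ q.support := hcu q
  have hsingle : (SimpleGraph.Walk.cons hadj.symm SimpleGraph.Walk.nil : T.Walk u v).IsPath := by
    simp [SimpleGraph.Walk.cons_isPath_iff, hadj.ne']
  have htk : q.takeUntil v hv = SimpleGraph.Walk.cons hadj.symm SimpleGraph.Walk.nil :=
    path_eq hT (hq.takeUntil hv) hsingle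
  refine ⟨⟨(u, v), hadj.symm⟩, ?_, rfl⟩
  apply p.darts_dropUntil_subset hu
  apply q.darts_takeUntil_subset hv
  rw [htk]
  simp

private lemma children_unique (hT : T.IsTree) {u u' x : V}
    (h1 : T.Adj v u) (hc1 : InSubtree T r v u) (h2 : T.Adj v u') (hc2 : InSubtree T r v u')
    (p : T.Walk x r) (hp : p.IsPath) (hu : u ∈ p.support) (hu' : u' ∈ p.support) :
    u = u' := by
  obtain ⟨d, hd, hdp⟩ := child_dart hT h1 hc1 p hp hu
  obtain ⟨d', hd', hdp'⟩ := child_dart hT h2 hc2 p hp hu'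
  have hnd : (p.darts.map (·.snd)).Nodup := by
    rw [p.map_snd_darts]; exact hp.support_nodup.tail
  have hdd : d = d' := List.inj_on_of_nodup_map hnd hd hd' (by
    show d.toProd.2 = d'.toProd.2
    rw [hdp, hdp'])
  have h3 := hdd ▸ hdp'
  rw [hdp] at h3
  exact (Prod.mk.injEq _ _ _ _ ▸ h3).1

private lemma child_not_mem (hT : T.IsTree) {u : V} (hadj : T.Adj v u)
    (hcu : InSubtree T r v u) : ¬ InSubtree T r u v := by
  intro h
  obtain ⟨p, hp, -⟩ := hT.existsUnique_path v r
  obtain ⟨d, hd, hdp⟩ := child_dart hT hadj hcu p hp (h p)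
  have hv : v ∈ p.support.tail := by
    rw [← p.map_snd_darts]
    exact List.mem_map.2 ⟨d, hd, by show d.toProd.2 = v; rw [hdp]⟩
  have hnd := hp.support_nodup
  rw [p.support_eq_cons] at hnd
  exact (List.nodup_cons.1 hnd).1 hv

private lemma exists_child (hT : T.IsTree) {x : V} (hx : InSubtree T r v x) (hxv : x ≠ v) :
    ∃ u, T.Adj v u ∧ InSubtree T r v u ∧ InSubtree T r u x := by
  obtain ⟨p, hp, -⟩ := hT.existsUnique_path x r
  have hv : v ∈ p.support := hx p
  have hvt : v ∈ p.support.tail := by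
    rw [p.support_eq_cons] at hv
    rcases List.mem_cons.1 hv with h | h
    · exact absurd rfl (h ▸ hxv)
    · exact h
  rw [← p.map_snd_darts] at hvt
  obtain ⟨d, hd, hdv⟩ := List.mem_map.1 hvt
  have hu : d.fst ∈ p.support := p.dart_fst_mem_support_of_mem_darts hd
  have hadj : T.Adj v d.fst := by
    have h2 := d.adj
    rw [hdv] at h2
    exact h2.symm
  have hsplit : p.darts = (p.takeUntil d.fst hu).darts ++ (p.dropUntil d.fst hu).darts := by
    conv_lhs => rw [← p.take_spec hu]
    rw [SimpleGraph.Walk.darts_append]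
  have hdd : d ∈ (p.dropUntil d.fst hu).darts := by
    rw [hsplit] at hd
    rcases List.mem_append.1 hd with h | h
    · exfalso
      set tk := p.takeUntil d.fst hu with htk
      have hmem : d.fst ∈ tk.support.dropLast := by
        rw [← tk.map_fst_darts]
        exact List.mem_map.2 ⟨d, h, rfl⟩
      have hlast : tk.support.getLast (by simp) = d.fst := tk.getLast_support
      have hnd : tk.support.Nodup := (hp.takeUntil hu).support_nodup
      have hspec : tk.support.dropLast ++ [tk.support.getLast (by simp)] = tk.support :=
        List.dropLast_append_getLast _
      rw [← hspec] at hnd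
      have hdisj := (List.nodup_append.1 hnd).2.2
      exact hdisj _ hmem _ (List.mem_singleton_self _) hlast.symm
    · exact h
  have hvq : v ∈ (p.dropUntil d.fst hu).support := by
    have h3 := (p.dropUntil d.fst hu).dart_snd_mem_support_of_mem_darts hdd
    rwa [hdv] at h3
  refine ⟨d.fst, hadj, ?_, (inSubtree_iff hT p hp).2 hu⟩
  exact (inSubtree_iff hT (p.dropUntil d.fst hu) (hp.dropUntil hu)).2 hvq

private lemma adj_same_subtree (hT : T.IsTree) {u x y : V} (hxy : T.Adj x y)
    (hyv : InSubtree T r v y) (hx : x ≠ v) (hy : y ≠ v)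
    (hadj : T.Adj v u) (hcu : InSubtree T r v u) (hux : InSubtree T r u x) :
    InSubtree T r u y := by
  obtain ⟨u', hadj', hcu', hu'y⟩ := exists_child hT hyv hy
  suffices h : u = u' by rw [h]; exact hu'y
  obtain ⟨p, hp, -⟩ := hT.existsUnique_path y r
  have hu'p : u' ∈ p.support := hu'y p
  by_cases hxp : x ∈ p.support
  · have hup : u ∈ p.support :=
      p.support_dropUntil_subset hxp (hux (p.dropUntil x hxp))
    exact children_unique hT hadj hcu hadj' hcu' p hp hup hu'p
  · have hp' : (SimpleGraph.Walk.cons hxy p).IsPath :=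
      (SimpleGraph.Walk.cons_isPath_iff _ _).2 ⟨hp, hxp⟩
    have hup' : u ∈ (SimpleGraph.Walk.cons hxy p).support := hux _
    rw [SimpleGraph.Walk.support_cons] at hup'
    rcases List.mem_cons.1 hup' with h | h
    swap
    · exact children_unique hT hadj hcu hadj' hcu' p hp h hu'p
    · exfalso
      subst h
      obtain ⟨d, hd, hdp⟩ := child_dart hT hadj hcu (SimpleGraph.Walk.cons hxy p) hp'
        (SimpleGraph.Walk.start_mem_support _)
      rw [SimpleGraph.Walk.darts_cons] at hd
      rcases List.mem_cons.1 hd with h | h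
      · rw [h] at hdp
        simp only [Prod.mk.injEq] at hdp
        exact hy (hdp.2.symm ▸ rfl)
      · have hfst : d.fst ∈ p.support := p.dart_fst_mem_support_of_mem_darts h
        rw [show d.fst = u from by rw [show d.fst = d.toProd.1 from rfl, hdp]] at hfst
        exact hxp hfst

private lemma endpoints_inSubtree {u : V} {e : Sym2 V}
    (he : e ∈ (subtree T r u).edgeSet) {x : V} (hx : x ∈ e) : InSubtree T r u x := by
  induction e with
  | _ a b =>
    rw [SimpleGraph.mem_edgeSet] at he
    rcases Sym2.mem_iff.1 hx with rfl | rfl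
    · exact he.2.1
    · exact he.2.2

private lemma subtree_mono {u : V} (hcu : InSubtree T r v u) :
    subtree T r u ≤ subtree T r v := by
  intro a b hab
  exact ⟨hab.1, inSubtree_trans hcu hab.2.1, inSubtree_trans hcu hab.2.2⟩

end Aux

/-! ### Counting auxiliaries -/

section Count
variable [Fintype V]

omit [Fintype V] in
private lemma isEOP_empty (H : SimpleGraph V) : IsEOP H (∅ : Set (Sym2 V)) :=
  ⟨Set.empty_subset _, fun _ h => absurd h (Set.notMem_empty _)⟩

omit [Fintype V] in
private lemma degS_empty (x : V) : degS (∅ : Set (Sym2 V)) x = 0 := by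
  simp [degS]

private lemma degS_eq_zero_iff {S : Set (Sym2 V)} {x : V} : degS S x = 0 ↔ ∀ e ∈ S, x ∉ e := by
  rw [degS, Set.ncard_eq_zero (Set.toFinite _), Set.eq_empty_iff_forall_notMem]
  simp only [Set.mem_setOf_eq, not_and]

private lemma bddAbove_aux (P : Set (Sym2 V) → Prop) :
    BddAbove {n | ∃ S : Set (Sym2 V), P S ∧ S.ncard = n} := by
  refine ⟨Nat.card (Sym2 V), fun n hn => ?_⟩
  obtain ⟨S, -, rfl⟩ := hn
  calc S.ncard ≤ (Set.univ : Set (Sym2 V)).ncard :=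
        Set.ncard_le_ncard (Set.subset_univ _) Set.finite_univ
    _ = Nat.card (Sym2 V) := Set.ncard_univ _

private lemma exists_eop_max (H : SimpleGraph V) :
    ∃ S : Set (Sym2 V), IsEOP H S ∧ S.ncard = eopNum H := by
  have h := Nat.sSup_mem (s := {n | ∃ S : Set (Sym2 V), IsEOP H S ∧ S.ncard = n})
    ⟨0, ∅, isEOP_empty H, by simp⟩ (bddAbove_aux _)
  obtain ⟨S, h1, h2⟩ := h
  exact ⟨S, h1, h2⟩

private lemma ncard_le_eopNum {H : SimpleGraph V} {S : Set (Sym2 V)} (h : IsEOP H S) :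
    S.ncard ≤ eopNum H :=
  le_csSup (bddAbove_aux _) ⟨S, h, rfl⟩

private lemma exists_rhoP_max (H : SimpleGraph V) (v : V) :
    ∃ S : Set (Sym2 V), IsEOP H S ∧ degS S v = 0 ∧ S.ncard = rhoP H v := by
  have h := Nat.sSup_mem (s := {n | ∃ S : Set (Sym2 V), IsEOP H S ∧ degS S v = 0 ∧ S.ncard = n})
    ⟨0, ∅, isEOP_empty H, degS_empty v, by simp⟩
    (by
      refine ⟨Nat.card (Sym2 V), fun n hn => ?_⟩
      obtain ⟨S, -, -, rfl⟩ := hn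
      calc S.ncard ≤ (Set.univ : Set (Sym2 V)).ncard :=
            Set.ncard_le_ncard (Set.subset_univ _) Set.finite_univ
        _ = Nat.card (Sym2 V) := Set.ncard_univ _)
  obtain ⟨S, h1, h2, h3⟩ := h
  exact ⟨S, h1, h2, h3⟩

private lemma ncard_le_rhoP {H : SimpleGraph V} {S : Set (Sym2 V)} {v : V}
    (h : IsEOP H S) (h0 : degS S v = 0) : S.ncard ≤ rhoP H v :=
  le_csSup (by
      refine ⟨Nat.card (Sym2 V), fun n hn => ?_⟩
      obtain ⟨S, -, -, rfl⟩ := hn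
      calc S.ncard ≤ (Set.univ : Set (Sym2 V)).ncard :=
            Set.ncard_le_ncard (Set.subset_univ _) Set.finite_univ
        _ = Nat.card (Sym2 V) := Set.ncard_univ _)
    ⟨S, h, h0, rfl⟩

end Count

private lemma ncard_biUnionAux {α β : Type*} (s : Finset α) (f : α → Set β)
    (hfin : ∀ a ∈ s, (f a).Finite)
    (hdis : ∀ a ∈ s, ∀ b ∈ s, a ≠ b → Disjoint (f a) (f b)) :
    (⋃ a ∈ s, f a).ncard = ∑ a ∈ s, (f a).ncard := by
  induction s using Finset.cons_induction with
  | empty => simp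
  | cons a s ha ih =>
    rw [Finset.sum_cons]
    have hrw : (⋃ b ∈ Finset.cons a s ha, f b) = f a ∪ ⋃ b ∈ s, f b := by
      simp [Set.iUnion_or, Set.iUnion_union_distrib]
    rw [hrw]
    have hfin' : (⋃ b ∈ s, f b).Finite :=
      Set.Finite.biUnion s.finite_toSet (fun b hb => hfin b (Finset.mem_cons_of_mem hb))
    have hdisj : Disjoint (f a) (⋃ b ∈ s, f b) := by
      rw [Set.disjoint_iUnion_right]
      intro b
      rw [Set.disjoint_iUnion_right]
      intro hb
      exact hdis a (Finset.mem_cons_self a s) b (Finset.mem_cons_of_mem hb)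
        (fun h => ha (h ▸ hb))
    rw [Set.ncard_union_eq hdisj (hfin a (Finset.mem_cons_self a s)) hfin',
      ih (fun b hb => hfin b (Finset.mem_cons_of_mem hb))
        (fun b hb c hc => hdis b (Finset.mem_cons_of_mem hb) c (Finset.mem_cons_of_mem hc))]

theorem stmt17 [Fintype V] (T : SimpleGraph V) (hT : T.IsTree) (r v : V) :
    rhoP (subtree T r v) v =
      ∑ᶠ u ∈ {u : V | T.Adj v u ∧ InSubtree T r v u}, eopNum (subtree T r u) := by
  classical
  have hChfin : {u : V | T.Adj v u ∧ InSubtree T r v u}.Finite := Set.toFinite _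
  have hfs := finsum_mem_coe_finset (fun u => eopNum (subtree T r u)) hChfin.toFinset
  rw [hChfin.coe_toFinset] at hfs
  rw [hfs]
  set F : Finset V := hChfin.toFinset with hFdef
  have hmemF : ∀ u : V, u ∈ F ↔ (T.Adj v u ∧ InSubtree T r v u) := by
    intro u; rw [hFdef, Set.Finite.mem_toFinset]; rfl
  -- disjointness of edge sets of distinct children's subtrees
  have hdisjE : ∀ a ∈ F, ∀ b ∈ F, a ≠ b →
      Disjoint ((subtree T r a).edgeSet) ((subtree T r b).edgeSet) := by
    intro a ha b hb hab
    rw [Set.disjoint_left]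
    intro e hea heb
    induction e with
    | _ x y =>
      have hax : InSubtree T r a x := endpoints_inSubtree hea (Sym2.mem_mk_left x y)
      have hbx : InSubtree T r b x := endpoints_inSubtree heb (Sym2.mem_mk_left x y)
      obtain ⟨p, hp, -⟩ := hT.existsUnique_path x r
      exact hab (children_unique hT ((hmemF a).1 ha).1 ((hmemF a).1 ha).2
        ((hmemF b).1 hb).1 ((hmemF b).1 hb).2 p hp (hax p) (hbx p))
  apply le_antisymm
  · -- rhoP ≤ sum
    obtain ⟨S, hS, hSdeg, hScard⟩ := exists_rhoP_max (subtree T r v) v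
    have hnotv : ∀ e ∈ S, v ∉ e := degS_eq_zero_iff.1 hSdeg
    have hcover : S = ⋃ u ∈ F, (S ∩ (subtree T r u).edgeSet) := by
      apply Set.Subset.antisymm
      · intro e he
        induction e with
        | _ x y =>
          have hadj : (subtree T r v).Adj x y := (SimpleGraph.mem_edgeSet _).1 (hS.1 he)
          have hxv : x ≠ v := fun h => hnotv _ he (h ▸ Sym2.mem_mk_left x y)
          have hyv : y ≠ v := fun h => hnotv _ he (h ▸ Sym2.mem_mk_right x y)
          obtain ⟨u, hadjvu, hcu, hux⟩ := exists_child hT hadj.2.1 hxv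
          have huy : InSubtree T r u y :=
            adj_same_subtree hT hadj.1 hadj.2.2 hxv hyv hadjvu hcu hux
          refine Set.mem_biUnion ((hmemF u).2 ⟨hadjvu, hcu⟩) ⟨he, ?_⟩
          exact (SimpleGraph.mem_edgeSet _).2 ⟨hadj.1, hux, huy⟩
      · exact Set.iUnion₂_subset fun u hu => Set.inter_subset_left
    have hSncard : S.ncard = ∑ u ∈ F, (S ∩ (subtree T r u).edgeSet).ncard := by
      conv_lhs => rw [hcover]
      exact ncard_biUnionAux F _ (fun a _ => Set.toFinite _)
        (fun a ha b hb hab => Set.disjoint_of_subset Set.inter_subset_right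
          Set.inter_subset_right (hdisjE a ha b hb hab))
    rw [← hScard, hSncard]
    apply Finset.sum_le_sum
    intro u hu
    apply ncard_le_eopNum (H := subtree T r u)
    constructor
    · exact Set.inter_subset_right
    · rintro e₁ h1 e₂ h2 hne ⟨x, y, hx, hy, hxy, hne1, hne2⟩
      have hxy' : (subtree T r v).Adj x y := subtree_mono ((hmemF u).1 hu).2 hxy
      exact hS.2 e₁ h1.1 e₂ h2.1 hne ⟨x, y, hx, hy, hxy', hne1, hne2⟩
  · -- sum ≤ rhoP
    have hmax : ∀ u : V, ∃ S, IsEOP (subtree T r u) S ∧ S.ncard = eopNum (subtree T r u) :=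
      fun u => exists_eop_max _
    choose Su hSu1 hSu2 using hmax
    set S : Set (Sym2 V) := ⋃ u ∈ F, Su u with hSdef
    have hSuE : ∀ u, Su u ⊆ (subtree T r u).edgeSet := fun u => (hSu1 u).1
    have hSncard : S.ncard = ∑ u ∈ F, (Su u).ncard := by
      rw [hSdef]
      exact ncard_biUnionAux F _ (fun a _ => Set.toFinite _)
        (fun a ha b hb hab => Set.disjoint_of_subset (hSuE a) (hSuE b) (hdisjE a ha b hb hab))
    have hSEOP : IsEOP (subtree T r v) S := by
      constructor
      · intro e he
        obtain ⟨u, hu, heu⟩ := Set.mem_iUnion₂.1 he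
        exact (SimpleGraph.edgeSet_subset_edgeSet.2 (subtree_mono ((hmemF u).1 hu).2))
          (hSuE u heu)
      · rintro e₁ h1 e₂ h2 hne ⟨x, y, hx, hy, hxy, hne1, hne2⟩
        obtain ⟨u₁, hu1, he1⟩ := Set.mem_iUnion₂.1 h1
        obtain ⟨u₂, hu2, he2⟩ := Set.mem_iUnion₂.1 h2
        have hux : InSubtree T r u₁ x := endpoints_inSubtree (hSuE u₁ he1) hx
        have hu'y : InSubtree T r u₂ y := endpoints_inSubtree (hSuE u₂ he2) hy
        have hxv : x ≠ v := fun h =>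
          child_not_mem hT ((hmemF u₁).1 hu1).1 ((hmemF u₁).1 hu1).2 (h ▸ hux)
        have hyv : y ≠ v := fun h =>
          child_not_mem hT ((hmemF u₂).1 hu2).1 ((hmemF u₂).1 hu2).2 (h ▸ hu'y)
        have huy : InSubtree T r u₁ y :=
          adj_same_subtree hT hxy.1 hxy.2.2 hxv hyv ((hmemF u₁).1 hu1).1
            ((hmemF u₁).1 hu1).2 hux
        have h12 : u₁ = u₂ := by
          obtain ⟨p, hp, -⟩ := hT.existsUnique_path y r
          exact children_unique hT ((hmemF u₁).1 hu1).1 ((hmemF u₁).1 hu1).2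
            ((hmemF u₂).1 hu2).1 ((hmemF u₂).1 hu2).2 p hp (huy p) (hu'y p)
        subst h12
        exact (hSu1 u₁).2 e₁ he1 e₂ he2 hne ⟨x, y, hx, hy, ⟨hxy.1, hux, huy⟩, hne1, hne2⟩
    have hSdeg : degS S v = 0 := by
      rw [degS_eq_zero_iff]
      intro e he hv
      obtain ⟨u, hu, heu⟩ := Set.mem_iUnion₂.1 he
      exact child_not_mem hT ((hmemF u).1 hu).1 ((hmemF u).1 hu).2
        (endpoints_inSubtree (hSuE u heu) hv)
    calc ∑ u ∈ F, eopNum (subtree T r u) = ∑ u ∈ F, (Su u).ncard := by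
          exact (Finset.sum_congr rfl (fun u _ => (hSu2 u).symm))
      _ = S.ncard := hSncard.symm
      _ ≤ rhoP (subtree T r v) v := ncard_le_rhoP hSEOP hSdeg
end

section
/- Let T be a finite tree rooted at a vertex r and let v be a vertex of T with at least one child. Then rho^l(T_v) = max over children u of v of ( max{rho^c(T_u), rho''(T_u)} + 1 + the sum over all children w of v with w ≠ u of rho'(T_w) ). -/
open scoped Classical

variable {V : Type*}

namespace EOPAux

open SimpleGraph Walk

noncomputable def thePath (T : SimpleGraph V) (hT : T.IsTree) (r x : V) : T.Walk x r :=
  (hT.existsUnique_path x r).choose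

lemma thePath_isPath (T : SimpleGraph V) (hT : T.IsTree) (r x : V) :
    (thePath T hT r x).IsPath := (hT.existsUnique_path x r).choose_spec.1

lemma path_eq_thePath {T : SimpleGraph V} (hT : T.IsTree) {r x : V} (p : T.Walk x r)
    (hp : p.IsPath) : p = thePath T hT r x :=
  (hT.existsUnique_path x r).choose_spec.2 p hp

lemma insubtree_iff {T : SimpleGraph V} (hT : T.IsTree) {r v x : V} :
    InSubtree T r v x ↔ v ∈ (thePath T hT r x).support := by
  constructor
  · exact fun h => h _
  · intro h p
    have := path_eq_thePath hT p.bypass p.bypass_isPath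
    exact p.support_bypass_subset (this ▸ h)

lemma insubtree_self (T : SimpleGraph V) (r v : V) : InSubtree T r v v :=
  fun p => p.start_mem_support

lemma insubtree_trans {T : SimpleGraph V} {r v u x : V} (hvu : InSubtree T r v u)
    (hux : InSubtree T r u x) : InSubtree T r v x := fun p =>
  (p.support_dropUntil_subset (hux p)) (hvu (p.dropUntil u (hux p)))

/-- if `x` is in both prefix and suffix of a path split at `u`, then `x = u`. -/
lemma eq_of_mem_take_drop {T : SimpleGraph V} {a b u x : V} {p : T.Walk a b}
    (hp : p.IsPath) (h : u ∈ p.support) (h1 : x ∈ (p.takeUntil u h).support)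
    (h2 : x ∈ (p.dropUntil u h).support) : x = u := by
  have hnd := hp.support_nodup
  rw [← p.take_spec h, support_append] at hnd
  by_contra hxu
  have h2' : x ∈ (p.dropUntil u h).support.tail := by
    have := (p.dropUntil u h).support_eq_cons
    rw [this, List.mem_cons] at h2
    exact h2.resolve_left hxu
  exact (List.disjoint_of_nodup_append hnd) h1 h2'

/-- appending two paths meeting only at the junction yields a path. -/
lemma isPath_append {T : SimpleGraph V} {a b c : V} {p : T.Walk a b} {q : T.Walk b c}
    (hp : p.IsPath) (hq : q.IsPath)
    (hmeet : ∀ x, x ∈ p.support → x ∈ q.support → x = b) : (p.append q).IsPath := by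
  rw [isPath_def, support_append]
  refine List.Nodup.append hp.support_nodup (hq.support_nodup.sublist (List.tail_sublist _)) ?_
  intro x hx hx'
  have : x = b := hmeet x hx (List.mem_of_mem_tail hx')
  subst this
  have := hq.support_nodup
  rw [q.support_eq_cons] at this
  exact (List.nodup_cons.mp this).1 hx'

lemma child_not_mem_path {T : SimpleGraph V} (hT : T.IsTree) {r v u : V}
    (hadj : T.Adj v u) (hu : InSubtree T r v u) : u ∉ (thePath T hT r v).support := by
  intro h
  have hv1 : v ∈ ((thePath T hT r v).dropUntil u h).support := hu _
  have hv2 : v ∈ ((thePath T hT r v).takeUntil u h).support := start_mem_support _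
  exact hadj.ne (eq_of_mem_take_drop (thePath_isPath T hT r v) h hv2 hv1)

lemma child_not_insubtree {T : SimpleGraph V} (hT : T.IsTree) {r v u : V}
    (hadj : T.Adj v u) (hu : InSubtree T r v u) : ¬ InSubtree T r u v :=
  fun h => child_not_mem_path hT hadj hu (h (thePath T hT r v))

lemma child_path {T : SimpleGraph V} (hT : T.IsTree) {r v u : V}
    (hadj : T.Adj v u) (hu : InSubtree T r v u) :
    thePath T hT r u = Walk.cons hadj.symm (thePath T hT r v) :=
  (path_eq_thePath hT _ ((thePath_isPath T hT r v).cons (child_not_mem_path hT hadj hu))).symm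


lemma children_disjoint {T : SimpleGraph V} (hT : T.IsTree) {r v u₁ u₂ x : V}
    (hadj₁ : T.Adj v u₁) (hu₁ : InSubtree T r v u₁)
    (hadj₂ : T.Adj v u₂) (hu₂ : InSubtree T r v u₂) (hne : u₁ ≠ u₂)
    (hx₁ : InSubtree T r u₁ x) (hx₂ : InSubtree T r u₂ x) : False := by
  set p := thePath T hT r x with hp
  have hpp : p.IsPath := thePath_isPath T hT r x
  have h1 : u₁ ∈ p.support := (insubtree_iff hT).mp hx₁
  have h2 : u₂ ∈ p.support := (insubtree_iff hT).mp hx₂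
  have hd : p.dropUntil u₁ h1 = thePath T hT r u₁ := path_eq_thePath hT _ (hpp.dropUntil h1)
  have hdc : p.dropUntil u₁ h1 = Walk.cons hadj₁.symm (thePath T hT r v) := by
    rw [hd, child_path hT hadj₁ hu₁]
  -- u₂ is in the prefix
  have h2' : u₂ ∈ (p.takeUntil u₁ h1).support := by
    rcases (mem_support_append_iff _ _).mp (by rw [p.take_spec h1]; exact h2) with h | h
    · exact h
    · rw [hdc, support_cons, List.mem_cons] at h
      rcases h with h | h
      · exact absurd h hne.symm
      · exact absurd h (child_not_mem_path hT hadj₂ hu₂)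
  have hne21 : u₂ ≠ u₁ := hne.symm
  set Q := p.takeUntil u₁ h1 with hQ
  have hQp : Q.IsPath := hpp.takeUntil h1
  set S₁ := Q.dropUntil u₂ h2' with hS₁
  have hS₁p : S₁.IsPath := hQp.dropUntil h2'
  have hvQ : v ∉ Q.support := by
    intro hvq
    have hvd : v ∈ (p.dropUntil u₁ h1).support := by
      rw [hdc, support_cons]; exact List.mem_cons_of_mem _ (start_mem_support _)
    exact hadj₁.ne (eq_of_mem_take_drop hpp h1 hvq hvd)
  have hW : (S₁.append (p.dropUntil u₁ h1)).IsPath := by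
    refine isPath_append hS₁p (hpp.dropUntil h1) ?_
    intro y hy1 hy2
    exact eq_of_mem_take_drop hpp h1 (Q.support_dropUntil_subset h2' hy1) hy2
  have hWeq : S₁.append (p.dropUntil u₁ h1) = Walk.cons hadj₂.symm (thePath T hT r v) := by
    rw [← child_path hT hadj₂ hu₂]; exact path_eq_thePath hT _ hW
  obtain ⟨s, he, R, hcons⟩ := Walk.exists_eq_cons_of_ne hne21 S₁
  have hsupp := congrArg Walk.support hWeq
  rw [hcons, cons_append, support_cons, support_cons] at hsupp
  have h2nd : (R.append (p.dropUntil u₁ h1)).support = (thePath T hT r v).support := by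
    simpa using hsupp
  have hsv : s = v := by
    have := congrArg List.head? h2nd
    rw [(R.append (p.dropUntil u₁ h1)).support_eq_cons, (thePath T hT r v).support_eq_cons] at this
    exact Option.some.inj this
  have hsQ : s ∈ Q.support := by
    apply Q.support_dropUntil_subset h2'
    rw [← hS₁, hcons, support_cons]
    exact List.mem_cons_of_mem _ (start_mem_support _)
  exact hvQ (hsv ▸ hsQ)


lemma exists_child {T : SimpleGraph V} (hT : T.IsTree) {r v x : V}
    (hx : InSubtree T r v x) (hxv : x ≠ v) :
    ∃ u : V, T.Adj v u ∧ InSubtree T r v u ∧ InSubtree T r u x := by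
  set p := thePath T hT r x with hp
  have hpp : p.IsPath := thePath_isPath T hT r x
  have hv : v ∈ p.support := (insubtree_iff hT).mp hx
  set Q := p.takeUntil v hv with hQ
  have hQp : Q.IsPath := hpp.takeUntil hv
  obtain ⟨u, he, R, hcons⟩ := Walk.exists_eq_cons_of_ne (Ne.symm hxv) Q.reverse
  have huQ : u ∈ Q.support := by
    have : u ∈ Q.reverse.support := by
      rw [hcons, support_cons]
      exact List.mem_cons_of_mem _ (start_mem_support _)
    rwa [support_reverse, List.mem_reverse] at this
  have hup : u ∈ p.support := p.support_takeUntil_subset hv huQ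
  -- build the path from u to r through v
  have huv : u ≠ v := he.ne'
  have hWp : ((Q.dropUntil u huQ).append (p.dropUntil v hv)).IsPath := by
    refine isPath_append (hQp.dropUntil huQ) (hpp.dropUntil hv) ?_
    intro y hy1 hy2
    exact eq_of_mem_take_drop hpp hv (Q.support_dropUntil_subset huQ hy1) hy2
  have hWeq := path_eq_thePath hT _ hWp
  have hvu : InSubtree T r v u := by
    rw [insubtree_iff hT, ← hWeq, mem_support_append_iff]
    exact Or.inl (end_mem_support _)
  exact ⟨u, he, hvu, (insubtree_iff hT).mpr hup⟩

lemma adj_dichotomy {T : SimpleGraph V} (hT : T.IsTree) {r a b : V} (hadj : T.Adj a b) :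
    InSubtree T r b a ∨ InSubtree T r a b := by
  by_cases h : a ∈ (thePath T hT r b).support
  · exact Or.inr ((insubtree_iff hT).mpr h)
  · left
    rw [insubtree_iff hT, ← path_eq_thePath hT (Walk.cons hadj (thePath T hT r b))
      ((thePath_isPath T hT r b).cons h), support_cons]
    exact List.mem_cons_of_mem _ (start_mem_support _)

/-- an edge of `T_v` avoiding `v` lies inside a single child subtree. -/
lemma adj_same_child {T : SimpleGraph V} (hT : T.IsTree) {r v a b : V} (hadj : T.Adj a b)
    (ha : InSubtree T r v a) (hb : InSubtree T r v b) (hav : a ≠ v) (hbv : b ≠ v) :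
    ∃ u : V, T.Adj v u ∧ InSubtree T r v u ∧ InSubtree T r u a ∧ InSubtree T r u b := by
  obtain ⟨u, hu1, hu2, hu3⟩ := exists_child hT ha hav
  obtain ⟨w, hw1, hw2, hw3⟩ := exists_child hT hb hbv
  rcases adj_dichotomy hT (r := r) hadj with h | h
  · -- a ∈ T_b ⊆ T_w, so u = w
    by_cases huw : u = w
    · exact ⟨u, hu1, hu2, hu3, huw ▸ hw3⟩
    · exact absurd (children_disjoint hT hu1 hu2 hw1 hw2 huw hu3
        (insubtree_trans hw3 h)) not_false
  · -- b ∈ T_a ⊆ T_u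
    exact ⟨u, hu1, hu2, hu3, insubtree_trans hu3 h⟩


section Comb

lemma hasCommonEdge_symm {H : SimpleGraph V} {e₁ e₂ : Sym2 V}
    (h : HasCommonEdge H e₁ e₂) : HasCommonEdge H e₂ e₁ := by
  obtain ⟨x, y, hx, hy, hadj, h1, h2⟩ := h
  exact ⟨y, x, hy, hx, hadj.symm, by rwa [Sym2.eq_swap], by rwa [Sym2.eq_swap]⟩

lemma isEOP_mono {H H' : SimpleGraph V} {S S' : Set (Sym2 V)} (h : IsEOP H S)
    (hle : H' ≤ H) (hsub : S' ⊆ S) (hedge : S' ⊆ H'.edgeSet) : IsEOP H' S' := by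
  refine ⟨hedge, fun e₁ h1 e₂ h2 hne hc => ?_⟩
  obtain ⟨x, y, hx, hy, hadj, hn1, hn2⟩ := hc
  exact h.2 e₁ (hsub h1) e₂ (hsub h2) hne ⟨x, y, hx, hy, hle hadj, hn1, hn2⟩

lemma isEOP_empty (H : SimpleGraph V) : IsEOP H (∅ : Set (Sym2 V)) :=
  ⟨Set.empty_subset _, fun e he => absurd he (Set.notMem_empty e)⟩

variable [Fintype V]
set_option linter.unusedSectionVars false

lemma degS_empty (x : V) : degS (∅ : Set (Sym2 V)) x = 0 := by
  simp [degS]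

lemma degS_eq_zero_iff {S : Set (Sym2 V)} {x : V} :
    degS S x = 0 ↔ ∀ e ∈ S, x ∉ e := by
  rw [degS, Set.ncard_eq_zero (Set.toFinite _), Set.eq_empty_iff_forall_notMem]
  constructor
  · exact fun h e he hx => h e ⟨he, hx⟩
  · rintro h e ⟨he, hx⟩; exact h e he hx

lemma degS_eq_one_of {S : Set (Sym2 V)} {x : V} {e₀ : Sym2 V} (he₀ : e₀ ∈ S) (hx : x ∈ e₀)
    (h : ∀ e ∈ S, x ∈ e → e = e₀) : degS S x = 1 := by
  have heq : {e ∈ S | x ∈ e} = {e₀} := by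
    apply Set.eq_singleton_iff_unique_mem.mpr
    exact ⟨⟨he₀, hx⟩, fun e he => h e he.1 he.2⟩
  rw [degS, heq, Set.ncard_singleton]

lemma eq_of_degS_eq_one {S : Set (Sym2 V)} {x : V} (h : degS S x = 1) {e₁ e₂ : Sym2 V}
    (h1 : e₁ ∈ S) (hx1 : x ∈ e₁) (h2 : e₂ ∈ S) (hx2 : x ∈ e₂) : e₁ = e₂ := by
  by_contra hne
  have : 1 < degS S x := by
    rw [degS, Set.one_lt_ncard (Set.toFinite _)]
    exact ⟨e₁, ⟨h1, hx1⟩, e₂, ⟨h2, hx2⟩, hne⟩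
  omega

lemma exists_edge_of_degS {S : Set (Sym2 V)} {x : V} (h : 1 ≤ degS S x) :
    ∃ e ∈ S, x ∈ e := by
  have hne : {e ∈ S | x ∈ e}.Nonempty := by
    rw [← Set.ncard_pos (Set.toFinite _)]; exact h
  obtain ⟨e, he, hx⟩ := hne
  exact ⟨e, he, hx⟩

lemma bddAbove_ncards (A : Set ℕ) (h : ∀ n ∈ A, ∃ S : Set (Sym2 V), S.ncard = n) :
    BddAbove A := by
  refine ⟨(Set.univ : Set (Sym2 V)).ncard, fun n hn => ?_⟩
  obtain ⟨S, rfl⟩ := h n hn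
  exact Set.ncard_le_ncard (Set.subset_univ S) (Set.toFinite _)

lemma rhoP_spec (H : SimpleGraph V) (x : V) :
    ∃ S : Set (Sym2 V), IsEOP H S ∧ degS S x = 0 ∧ S.ncard = rhoP H x := by
  have hmem := Nat.sSup_mem (s := {n | ∃ S : Set (Sym2 V), IsEOP H S ∧ degS S x = 0 ∧ S.ncard = n})
    ⟨0, ∅, isEOP_empty H, degS_empty x, by simp⟩
    (bddAbove_ncards _ (by rintro n ⟨S, -, -, hn⟩; exact ⟨S, hn⟩))
  obtain ⟨S, h1, h2, h3⟩ := hmem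
  exact ⟨S, h1, h2, h3⟩

lemma le_rhoP {H : SimpleGraph V} {x : V} {S : Set (Sym2 V)} (h1 : IsEOP H S)
    (h2 : degS S x = 0) : S.ncard ≤ rhoP H x :=
  le_csSup (bddAbove_ncards _ (by rintro n ⟨S', -, -, hn⟩; exact ⟨S', hn⟩)) ⟨S, h1, h2, rfl⟩

lemma le_rhoC {H : SimpleGraph V} {x : V} {S : Set (Sym2 V)} (h1 : IsEOP H S)
    (h2 : 1 ≤ degS S x) (h3 : ∀ u : V, s(x, u) ∈ S → degS S u = 1) :
    S.ncard ≤ rhoC H x :=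
  le_csSup (bddAbove_ncards _ (by rintro n ⟨S', -, -, -, hn⟩; exact ⟨S', hn⟩)) ⟨S, h1, h2, h3, rfl⟩

lemma le_rhoPP {H : SimpleGraph V} {x : V} {S : Set (Sym2 V)} (h1 : IsEOP H S)
    (h2 : ∀ y : V, y = x ∨ H.Adj x y → degS S y = 0) : S.ncard ≤ rhoPP H x :=
  le_csSup (bddAbove_ncards _ (by rintro n ⟨S', -, -, hn⟩; exact ⟨S', hn⟩)) ⟨S, h1, h2, rfl⟩

lemma rhoCmax_spec (H : SimpleGraph V) (x : V) :
    ∃ S : Set (Sym2 V), IsEOP H S ∧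
      ((1 ≤ degS S x ∧ ∀ u : V, s(x, u) ∈ S → degS S u = 1) ∨
        (∀ y : V, y = x ∨ H.Adj x y → degS S y = 0)) ∧
      S.ncard = max (rhoC H x) (rhoPP H x) := by
  have hPP : ∃ S : Set (Sym2 V), IsEOP H S ∧
      (∀ y : V, y = x ∨ H.Adj x y → degS S y = 0) ∧ S.ncard = rhoPP H x := by
    have hmem := Nat.sSup_mem (s := {n | ∃ S : Set (Sym2 V), IsEOP H S ∧
        (∀ y : V, y = x ∨ H.Adj x y → degS S y = 0) ∧ S.ncard = n})
      ⟨0, ∅, isEOP_empty H, fun y _ => degS_empty y, by simp⟩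
      (bddAbove_ncards _ (by rintro n ⟨S, -, -, hn⟩; exact ⟨S, hn⟩))
    obtain ⟨S, h1, h2, h3⟩ := hmem
    exact ⟨S, h1, h2, h3⟩
  rcases le_or_gt (rhoC H x) (rhoPP H x) with hle | hlt
  · obtain ⟨S, h1, h2, h3⟩ := hPP
    exact ⟨S, h1, Or.inr h2, by rw [max_eq_right hle]; exact h3⟩
  · have hne : {n | ∃ S : Set (Sym2 V), IsEOP H S ∧ 1 ≤ degS S x ∧
        (∀ u : V, s(x, u) ∈ S → degS S u = 1) ∧ S.ncard = n}.Nonempty := by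
      by_contra hemp
      rw [Set.not_nonempty_iff_eq_empty] at hemp
      rw [rhoC, hemp, csSup_empty] at hlt
      simp only [Nat.bot_eq_zero] at hlt
      omega
    have hmem := Nat.sSup_mem hne
      (bddAbove_ncards _ (by rintro n ⟨S, -, -, -, hn⟩; exact ⟨S, hn⟩))
    obtain ⟨S, h1, h2, h3, h4⟩ := hmem
    exact ⟨S, h1, Or.inl ⟨h2, h3⟩, by rw [max_eq_left hlt.le]; exact h4⟩

lemma ncard_biUnion {α : Type*} (s : Finset α) (g : α → Set (Sym2 V))
    (hdisj : ∀ a ∈ s, ∀ b ∈ s, a ≠ b → Disjoint (g a) (g b)) :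
    (⋃ a ∈ s, g a).ncard = ∑ a ∈ s, (g a).ncard := by
  classical
  induction s using Finset.induction with
  | empty => simp
  | @insert a s ha ih =>
    rw [Finset.sum_insert ha, Finset.set_biUnion_insert]
    rw [Set.ncard_union_eq ?_ (Set.toFinite _) (Set.toFinite _)]
    · rw [ih (fun b hb c hc hbc => hdisj b (Finset.mem_insert_of_mem hb)
        c (Finset.mem_insert_of_mem hc) hbc)]
    · rw [Set.disjoint_iUnion₂_right]
      intro b hb
      exact hdisj a (Finset.mem_insert_self a s) b (Finset.mem_insert_of_mem hb)
        (fun h => ha (h ▸ hb))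


omit [Fintype V] in
lemma subtree_adj_mono {T : SimpleGraph V} {r v w a b : V} (h : InSubtree T r v w)
    (hadj : (subtree T r w).Adj a b) : (subtree T r v).Adj a b :=
  ⟨hadj.1, insubtree_trans h hadj.2.1, insubtree_trans h hadj.2.2⟩

omit [Fintype V] in
lemma subtree_le {T : SimpleGraph V} {r v w : V} (h : InSubtree T r v w) :
    subtree T r w ≤ subtree T r v := by
  intro a b hadj
  exact subtree_adj_mono h hadj

omit [Fintype V] in
lemma edge_endpoints {T : SimpleGraph V} {r w : V} {e : Sym2 V}
    (he : e ∈ (subtree T r w).edgeSet) : ∀ x ∈ e, InSubtree T r w x := by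
  induction e using Sym2.ind with
  | _ a b =>
    rw [SimpleGraph.mem_edgeSet] at he
    intro x hx
    rcases Sym2.mem_iff.mp hx with rfl | rfl
    · exact he.2.1
    · exact he.2.2

lemma ub {T : SimpleGraph V} (hT : T.IsTree) {r v : V}
    {S : Set (Sym2 V)} (hS : IsEOP (subtree T r v) S) (hdeg : degS S v = 1) :
    ∃ u : V, (T.Adj v u ∧ InSubtree T r v u) ∧
      S.ncard ≤ max (rhoC (subtree T r u) u) (rhoPP (subtree T r u) u) + 1 +
        ∑ᶠ w ∈ {w : V | (T.Adj v w ∧ InSubtree T r v w) ∧ w ≠ u},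
          rhoP (subtree T r w) w := by
  classical
  obtain ⟨e₀, he₀S, hve₀⟩ := exists_edge_of_degS (by omega : 1 ≤ degS S v)
  obtain ⟨u, rfl⟩ := Sym2.mem_iff_exists.mp hve₀
  have hadj : (subtree T r v).Adj v u := (SimpleGraph.mem_edgeSet _).mp (hS.1 he₀S)
  have hCu : T.Adj v u ∧ InSubtree T r v u := ⟨hadj.1, hadj.2.2⟩
  refine ⟨u, hCu, ?_⟩
  set Cset : Set V := {w : V | T.Adj v w ∧ InSubtree T r v w} with hCset
  have hCfin : Cset.Finite := Set.toFinite _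
  set CF : Finset V := hCfin.toFinset with hCF
  set g : V → Set (Sym2 V) := fun w => S ∩ (subtree T r w).edgeSet with hg
  have hgv : ∀ w, T.Adj v w → InSubtree T r v w → ∀ e ∈ g w, v ∉ e := by
    intro w hw1 hw2 e he hv
    exact child_not_insubtree hT hw1 hw2 (edge_endpoints he.2 v hv)
  have hsplit : ∀ e, e ∈ S → v ∉ e → ∃ w ∈ CF, e ∈ g w := by
    intro e
    induction e using Sym2.ind with
    | _ a b =>
      intro he hv
      have headj : (subtree T r v).Adj a b := (SimpleGraph.mem_edgeSet _).mp (hS.1 he)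
      have hav : a ≠ v := fun h => hv (h ▸ Sym2.mem_mk_left a b)
      have hbv : b ≠ v := fun h => hv (h ▸ Sym2.mem_mk_right a b)
      obtain ⟨w, hw1, hw2, hwa, hwb⟩ :=
        adj_same_child hT headj.1 headj.2.1 headj.2.2 hav hbv
      exact ⟨w, hCfin.mem_toFinset.mpr ⟨hw1, hw2⟩,
        he, (SimpleGraph.mem_edgeSet _).mpr ⟨headj.1, hwa, hwb⟩⟩
  have hdecomp : S = {s(v,u)} ∪ ⋃ w ∈ CF, g w := by
    apply Set.Subset.antisymm
    · intro e he
      by_cases hv : v ∈ e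
      · have : e = s(v,u) := eq_of_degS_eq_one hdeg he hv he₀S hve₀
        exact Or.inl this
      · obtain ⟨w, hw, hmem⟩ := hsplit e he hv
        exact Or.inr (Set.mem_biUnion hw hmem)
    · rintro e (rfl | he)
      · exact he₀S
      · obtain ⟨w, hw, hmem⟩ := Set.mem_iUnion₂.mp he
        exact hmem.1
  have hgdisj : ∀ w₁ ∈ CF, ∀ w₂ ∈ CF, w₁ ≠ w₂ → Disjoint (g w₁) (g w₂) := by
    intro w₁ h1 w₂ h2 hne
    rw [hCF, Set.Finite.mem_toFinset] at h1 h2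
    rw [Set.disjoint_left]
    intro e
    induction e using Sym2.ind with
    | _ a b =>
      intro he1 he2
      exact children_disjoint hT h1.1 h1.2 h2.1 h2.2 hne
        (edge_endpoints he1.2 a (Sym2.mem_mk_left a b))
        (edge_endpoints he2.2 a (Sym2.mem_mk_left a b))
  have hucf : u ∈ CF := hCfin.mem_toFinset.mpr hCu
  have he₀notin : s(v,u) ∉ ⋃ w ∈ CF, g w := by
    intro h
    obtain ⟨w, hw, hmem⟩ := Set.mem_iUnion₂.mp h
    have hw' := hCfin.mem_toFinset.mp hw
    exact hgv w hw'.1 hw'.2 _ hmem (Sym2.mem_mk_left v u)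
  have hcount : S.ncard = 1 + ∑ w ∈ CF, (g w).ncard := by
    rw [hdecomp, Set.singleton_union,
      Set.ncard_insert_of_notMem he₀notin (Set.toFinite _), ncard_biUnion CF g hgdisj]
    omega
  -- bound for children other than u
  have hboundw : ∀ w, T.Adj v w → InSubtree T r v w → w ≠ u →
      (g w).ncard ≤ rhoP (subtree T r w) w := by
    intro w hw1 hw2 hwu
    refine le_rhoP (isEOP_mono hS (subtree_le hw2) Set.inter_subset_left
      Set.inter_subset_right) ?_
    rw [degS_eq_zero_iff]
    intro e he hwe
    have hvw : (subtree T r v).Adj v w := ⟨hw1, insubtree_self T r v, hw2⟩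
    have hvnotine : v ∉ e := hgv w hw1 hw2 e he
    have hne1 : s(v,w) ≠ s(v,u) := by
      intro hh
      rcases Sym2.eq_iff.mp hh with ⟨-, h⟩ | ⟨h, -⟩
      · exact hwu h
      · exact hCu.1.ne h
    have hne2 : s(v,w) ≠ e := fun h => hvnotine (h ▸ Sym2.mem_mk_left v w)
    have hne3 : s(v,u) ≠ e := fun h => hvnotine (h ▸ Sym2.mem_mk_left v u)
    exact hS.2 _ he₀S _ he.1 hne3 ⟨v, w, Sym2.mem_mk_left v u, hwe, hvw, hne1, hne2⟩
  -- bound for u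
  have hSu : IsEOP (subtree T r u) (g u) :=
    isEOP_mono hS (subtree_le hCu.2) Set.inter_subset_left Set.inter_subset_right
  have hkey : ∀ x y : V, (subtree T r u).Adj u x → s(x,y) ∈ g u → u ≠ y → False := by
    intro x y hux he huy
    have hxv : x ≠ v := fun h => child_not_insubtree hT hCu.1 hCu.2 (h ▸ hux.2.2)
    have hyv : y ≠ v := fun h =>
      (hgv u hCu.1 hCu.2 _ he) (h ▸ Sym2.mem_mk_right x y)
    have hadjvux : (subtree T r v).Adj u x := subtree_adj_mono hCu.2 hux
    have hne1 : s(u,x) ≠ s(v,u) := by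
      intro hh
      rcases Sym2.eq_iff.mp hh with ⟨h, -⟩ | ⟨-, h⟩
      · exact hCu.1.ne h.symm
      · exact hxv h
    have hne2 : s(u,x) ≠ s(x,y) := by
      intro hh
      rcases Sym2.eq_iff.mp hh with ⟨h, -⟩ | ⟨h, -⟩
      · exact hux.1.ne h
      · exact huy h
    have hne3 : s(v,u) ≠ s(x,y) := by
      intro h
      rcases Sym2.mem_iff.mp (h ▸ Sym2.mem_mk_left v u) with h' | h'
      · exact hxv h'.symm
      · exact hyv h'.symm
    exact hS.2 _ he₀S _ he.1 hne3
      ⟨u, x, Sym2.mem_mk_right v u, Sym2.mem_mk_left x y, hadjvux, hne1, hne2⟩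
  have hboundu : (g u).ncard ≤ max (rhoC (subtree T r u) u) (rhoPP (subtree T r u) u) := by
    by_cases hdu : 1 ≤ degS (g u) u
    · refine le_max_of_le_left (le_rhoC hSu hdu ?_)
      intro x hx
      refine degS_eq_one_of hx (Sym2.mem_mk_right u x) ?_
      intro e he hxe
      by_contra hne
      obtain ⟨y, rfl⟩ := Sym2.mem_iff_exists.mp hxe
      have huadj : (subtree T r u).Adj u x := (SimpleGraph.mem_edgeSet _).mp (hSu.1 hx)
      have huy : u ≠ y := by
        rintro rfl
        exact hne (Sym2.eq_swap)
      exact hkey x y huadj he huy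
    · have hdu0 : degS (g u) u = 0 := by omega
      have hnone := degS_eq_zero_iff.mp hdu0
      refine le_max_of_le_right (le_rhoPP hSu ?_)
      intro y hy
      rw [degS_eq_zero_iff]
      intro e he hye
      rcases hy with rfl | hyadj
      · exact hnone e he hye
      · obtain ⟨z, rfl⟩ := Sym2.mem_iff_exists.mp hye
        have huz : u ≠ z := by
          rintro rfl
          exact hnone _ he (Sym2.mem_mk_right y u)
        exact hkey y z hyadj he huz
  -- assemble
  have hseteq : {w : V | (T.Adj v w ∧ InSubtree T r v w) ∧ w ≠ u} = (↑(CF.erase u) : Set V) := by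
    ext w
    constructor
    · rintro ⟨hw, hwu⟩
      exact Finset.mem_coe.mpr (Finset.mem_erase.mpr ⟨hwu, hCfin.mem_toFinset.mpr hw⟩)
    · intro hw
      have hw' := Finset.mem_erase.mp (Finset.mem_coe.mp hw)
      exact ⟨hCfin.mem_toFinset.mp hw'.2, hw'.1⟩
  rw [hseteq, finsum_mem_coe_finset]
  have hsum : ∑ w ∈ CF, (g w).ncard = (g u).ncard + ∑ w ∈ CF.erase u, (g w).ncard :=
    (Finset.add_sum_erase CF _ hucf).symm
  have hsumle : ∑ w ∈ CF.erase u, (g w).ncard ≤ ∑ w ∈ CF.erase u, rhoP (subtree T r w) w := by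
    refine Finset.sum_le_sum ?_
    intro w hw
    have hw' := hCfin.mem_toFinset.mp (Finset.mem_of_mem_erase hw)
    exact hboundw w hw'.1 hw'.2 (Finset.ne_of_mem_erase hw)
  omega

lemma lb {T : SimpleGraph V} (hT : T.IsTree) {r v u : V}
    (hCu : T.Adj v u ∧ InSubtree T r v u) :
    ∃ S : Set (Sym2 V), IsEOP (subtree T r v) S ∧ degS S v = 1 ∧
      S.ncard = max (rhoC (subtree T r u) u) (rhoPP (subtree T r u) u) + 1 +
        ∑ᶠ w ∈ {w : V | (T.Adj v w ∧ InSubtree T r v w) ∧ w ≠ u},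
          rhoP (subtree T r w) w := by
  classical
  obtain ⟨Su, hSu, hSuprop, hSucard⟩ := rhoCmax_spec (subtree T r u) u
  choose SW hSW1 hSW2 hSW3 using fun w : V => rhoP_spec (subtree T r w) w
  set Wset : Set V := {w : V | (T.Adj v w ∧ InSubtree T r v w) ∧ w ≠ u} with hWset
  have hWfin : Wset.Finite := Set.toFinite _
  set WF : Finset V := hWfin.toFinset with hWF
  have heqchild : ∀ c₁ c₂ x : V, T.Adj v c₁ → InSubtree T r v c₁ →
      T.Adj v c₂ → InSubtree T r v c₂ →
      InSubtree T r c₁ x → InSubtree T r c₂ x → c₁ = c₂ := by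
    intro c₁ c₂ x h1 h2 h3 h4 h5 h6
    by_contra hne
    exact children_disjoint hT h1 h2 h3 h4 hne h5 h6
  have hSuend : ∀ e ∈ Su, ∀ x ∈ e, InSubtree T r u x :=
    fun e he => edge_endpoints (hSu.1 he)
  have hSWend : ∀ w : V, ∀ e ∈ SW w, ∀ x ∈ e, InSubtree T r w x :=
    fun w e he => edge_endpoints ((hSW1 w).1 he)
  have hvnot : ∀ e ∈ Su ∪ ⋃ w ∈ WF, SW w, v ∉ e := by
    rintro e (he | he) hv
    · exact child_not_insubtree hT hCu.1 hCu.2 (hSuend e he v hv)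
    · obtain ⟨w, hw, hmem⟩ := Set.mem_iUnion₂.mp he
      have hw' := hWfin.mem_toFinset.mp hw
      exact child_not_insubtree hT hw'.1.1 hw'.1.2 (hSWend w e hmem v hv)
  have claimA : ∀ (c : V) (E : Set (Sym2 V)), IsEOP (subtree T r c) E →
      ∀ e₁ ∈ E, ∀ e₂ ∈ E, e₁ ≠ e₂ → HasCommonEdge (subtree T r v) e₁ e₂ → False := by
    intro c E hE e₁ h1 e₂ h2 hne hc
    obtain ⟨x, y, hx, hy, hadj, hn1, hn2⟩ := hc
    have hx' := edge_endpoints (hE.1 h1) x hx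
    have hy' := edge_endpoints (hE.1 h2) y hy
    exact hE.2 e₁ h1 e₂ h2 hne ⟨x, y, hx, hy, ⟨hadj.1, hx', hy'⟩, hn1, hn2⟩
  have claimB : ∀ c₁ c₂ : V, T.Adj v c₁ → InSubtree T r v c₁ →
      T.Adj v c₂ → InSubtree T r v c₂ → c₁ ≠ c₂ →
      ∀ e₁ e₂ : Sym2 V, (∀ x ∈ e₁, InSubtree T r c₁ x) → (∀ x ∈ e₂, InSubtree T r c₂ x) →
      HasCommonEdge (subtree T r v) e₁ e₂ → False := by
    intro c₁ c₂ ha1 hi1 ha2 hi2 hne e₁ e₂ hend1 hend2 hc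
    obtain ⟨x, y, hx, hy, hadj, -, -⟩ := hc
    have hx1 : InSubtree T r c₁ x := hend1 x hx
    have hy2 : InSubtree T r c₂ y := hend2 y hy
    have hxv : x ≠ v := fun h => child_not_insubtree hT ha1 hi1 (h ▸ hx1)
    have hyv : y ≠ v := fun h => child_not_insubtree hT ha2 hi2 (h ▸ hy2)
    obtain ⟨c, hc1, hc2, hcx, hcy⟩ := adj_same_child hT hadj.1 hadj.2.1 hadj.2.2 hxv hyv
    have e1 : c₁ = c := heqchild c₁ c x ha1 hi1 hc1 hc2 hx1 hcx
    have e2 : c₂ = c := heqchild c₂ c y ha2 hi2 hc1 hc2 hy2 hcy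
    exact hne (e1.trans e2.symm)
  have claimU : ∀ e₂ ∈ Su, HasCommonEdge (subtree T r v) s(v,u) e₂ → False := by
    intro e₂ h2 hc
    obtain ⟨x, y, hx, hy, hadj, hn1, hn2⟩ := hc
    have hyu : InSubtree T r u y := hSuend e₂ h2 y hy
    have hxvu : x = v ∨ x = u := Sym2.mem_iff.mp hx
    rcases hxvu with rfl | rfl
    · -- x = v
      have hyeq : y = u := heqchild y u y hadj.1 hadj.2.2 hCu.1 hCu.2
        (insubtree_self T r y) hyu
      exact hn1 (by rw [hyeq])
    · -- x = u  (now the variable named x plays the role of u; hCu etc. talk about u)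
      -- after rcases, all occurrences are substituted; we refer to the substituted form
      have hadjuy : (subtree T r x).Adj x y := ⟨hadj.1, insubtree_self T r x, hyu⟩
      rcases hSuprop with ⟨hd1, hstar⟩ | hPP
      · obtain ⟨z, rfl⟩ := Sym2.mem_iff_exists.mp hy
        have hzu : z ≠ x := by
          intro h
          subst h
          exact hn2 Sym2.eq_swap
        obtain ⟨f, hf, huf⟩ := exists_edge_of_degS hd1
        obtain ⟨t, rfl⟩ := Sym2.mem_iff_exists.mp huf
        by_cases hyt : y = t
        · subst hyt
          have hdy := hstar y hf
          have hfne : s(x,y) ≠ s(y,z) := by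
            intro hh
            rcases Sym2.eq_iff.mp hh with ⟨h, -⟩ | ⟨h, -⟩
            · exact hadj.ne h
            · exact hzu h.symm
          exact hfne (eq_of_degS_eq_one hdy hf (Sym2.mem_mk_right x y) h2
            (Sym2.mem_mk_left y z))
        · have hne1 : s(x,y) ≠ s(x,t) := by
            intro hh
            rcases Sym2.eq_iff.mp hh with ⟨-, h⟩ | ⟨-, h⟩
            · exact hyt h
            · exact hadj.ne h.symm
          have hfne2 : s(x,t) ≠ s(y,z) := by
            intro hh
            have hmem : x ∈ s(y,z) := hh ▸ Sym2.mem_mk_left x t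
            rcases Sym2.mem_iff.mp hmem with h | h
            · exact hadj.ne h
            · exact hzu h.symm
          exact hSu.2 _ hf _ h2 hfne2
            ⟨x, y, Sym2.mem_mk_left x t, Sym2.mem_mk_left y z, hadjuy, hne1, hn2⟩
      · have hdy := hPP y (Or.inr hadjuy)
        exact (degS_eq_zero_iff.mp hdy) e₂ h2 hy
  have claimW : ∀ w : V, w ∈ WF → ∀ e₂ ∈ SW w,
      HasCommonEdge (subtree T r v) s(v,u) e₂ → False := by
    intro w hw e₂ h2 hc
    have hw' := hWfin.mem_toFinset.mp hw
    obtain ⟨x, y, hx, hy, hadj, hn1, hn2⟩ := hc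
    have hyw : InSubtree T r w y := hSWend w e₂ h2 y hy
    have hxvu : x = v ∨ x = u := Sym2.mem_iff.mp hx
    rcases hxvu with rfl | rfl
    · -- x = v
      have hyweq : y = w := heqchild y w y hadj.1 hadj.2.2 hw'.1.1 hw'.1.2
        (insubtree_self T r y) hyw
      subst hyweq
      exact (degS_eq_zero_iff.mp (hSW2 y)) e₂ h2 hy
    · -- x = u
      have hxv : x ≠ v := hCu.1.ne'
      have hyv : y ≠ v := fun h => child_not_insubtree hT hw'.1.1 hw'.1.2 (h ▸ hyw)
      obtain ⟨c, hc1, hc2, hcx, hcy⟩ := adj_same_child hT hadj.1 hadj.2.1 hadj.2.2 hxv hyv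
      have e1 : x = c := heqchild x c x hCu.1 hCu.2 hc1 hc2 (insubtree_self T r x) hcx
      have e2 : w = c := heqchild w c y hw'.1.1 hw'.1.2 hc1 hc2 hyw hcy
      exact hw'.2 (e2.trans e1.symm)
  -- now the three required properties
  refine ⟨insert s(v,u) (Su ∪ ⋃ w ∈ WF, SW w), ⟨?_, ?_⟩, ?_, ?_⟩
  · -- subset of edge set
    rintro e (rfl | he)
    · exact (SimpleGraph.mem_edgeSet _).mpr ⟨hCu.1, insubtree_self T r v, hCu.2⟩
    · rcases he with he | he
      · exact SimpleGraph.edgeSet_mono (subtree_le hCu.2) (hSu.1 he)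
      · obtain ⟨w, hw, hmem⟩ := Set.mem_iUnion₂.mp he
        have hw' := hWfin.mem_toFinset.mp hw
        exact SimpleGraph.edgeSet_mono (subtree_le hw'.1.2) ((hSW1 w).1 hmem)
  · -- EOP property
    rintro e₁ (rfl | h1) e₂ (rfl | h2) hne hc
    · exact hne rfl
    · rcases h2 with h2 | h2
      · exact claimU e₂ h2 hc
      · obtain ⟨w, hw, hmem⟩ := Set.mem_iUnion₂.mp h2
        exact claimW w hw e₂ hmem hc
    · rcases h1 with h1 | h1
      · exact claimU e₁ h1 (hasCommonEdge_symm hc)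
      · obtain ⟨w, hw, hmem⟩ := Set.mem_iUnion₂.mp h1
        exact claimW w hw e₁ hmem (hasCommonEdge_symm hc)
    · rcases h1 with h1 | h1 <;> rcases h2 with h2 | h2
      · exact claimA u Su hSu e₁ h1 e₂ h2 hne hc
      · obtain ⟨w, hw, hmem⟩ := Set.mem_iUnion₂.mp h2
        have hw' := hWfin.mem_toFinset.mp hw
        exact claimB u w hCu.1 hCu.2 hw'.1.1 hw'.1.2 (fun h => hw'.2 h.symm) e₁ e₂
          (hSuend e₁ h1) (hSWend w e₂ hmem) hc
      · obtain ⟨w, hw, hmem⟩ := Set.mem_iUnion₂.mp h1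
        have hw' := hWfin.mem_toFinset.mp hw
        exact claimB w u hw'.1.1 hw'.1.2 hCu.1 hCu.2 hw'.2 e₁ e₂
          (hSWend w e₁ hmem) (hSuend e₂ h2) hc
      · obtain ⟨w₁, hw1, hmem1⟩ := Set.mem_iUnion₂.mp h1
        obtain ⟨w₂, hw2, hmem2⟩ := Set.mem_iUnion₂.mp h2
        have hw1' := hWfin.mem_toFinset.mp hw1
        have hw2' := hWfin.mem_toFinset.mp hw2
        by_cases hww : w₁ = w₂
        · subst hww
          exact claimA w₁ (SW w₁) (hSW1 w₁) e₁ hmem1 e₂ hmem2 hne hc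
        · exact claimB w₁ w₂ hw1'.1.1 hw1'.1.2 hw2'.1.1 hw2'.1.2 hww e₁ e₂
            (hSWend w₁ e₁ hmem1) (hSWend w₂ e₂ hmem2) hc
  · -- degree of v is 1
    refine degS_eq_one_of (Set.mem_insert _ _) (Sym2.mem_mk_left v u) ?_
    rintro e (rfl | he) hv
    · rfl
    · exact absurd hv (hvnot e he)
  · -- cardinality
    have hnotmem : s(v,u) ∉ Su ∪ ⋃ w ∈ WF, SW w := fun h =>
      hvnot _ h (Sym2.mem_mk_left v u)
    have hdisj1 : Disjoint Su (⋃ w ∈ WF, SW w) := by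
      rw [Set.disjoint_left]
      intro e
      induction e using Sym2.ind with
      | _ a b =>
        intro he1 he2
        obtain ⟨w, hw, hmem⟩ := Set.mem_iUnion₂.mp he2
        have hw' := hWfin.mem_toFinset.mp hw
        exact hw'.2 ((heqchild w u a hw'.1.1 hw'.1.2 hCu.1 hCu.2
          (hSWend w _ hmem a (Sym2.mem_mk_left a b))
          (hSuend _ he1 a (Sym2.mem_mk_left a b))))
    have hdisj2 : ∀ w₁ ∈ WF, ∀ w₂ ∈ WF, w₁ ≠ w₂ → Disjoint (SW w₁) (SW w₂) := by
      intro w₁ hw1 w₂ hw2 hne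
      have hw1' := hWfin.mem_toFinset.mp hw1
      have hw2' := hWfin.mem_toFinset.mp hw2
      rw [Set.disjoint_left]
      intro e
      induction e using Sym2.ind with
      | _ a b =>
        intro he1 he2
        exact hne (heqchild w₁ w₂ a hw1'.1.1 hw1'.1.2 hw2'.1.1 hw2'.1.2
          (hSWend w₁ _ he1 a (Sym2.mem_mk_left a b))
          (hSWend w₂ _ he2 a (Sym2.mem_mk_left a b)))
    rw [Set.ncard_insert_of_notMem hnotmem (Set.toFinite _),
      Set.ncard_union_eq hdisj1 (Set.toFinite _) (Set.toFinite _),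
      ncard_biUnion WF SW hdisj2]
    have hsum : ∑ w ∈ WF, (SW w).ncard = ∑ w ∈ WF, rhoP (subtree T r w) w :=
      Finset.sum_congr rfl (fun w _ => hSW3 w)
    have hfs : ∑ᶠ w ∈ Wset, rhoP (subtree T r w) w = ∑ w ∈ WF, rhoP (subtree T r w) w := by
      rw [hWF, ← finsum_mem_coe_finset, Set.Finite.coe_toFinset]
    rw [hWset] at hfs
    rw [hfs, hsum, hSucard]
    omega

end Comb

end EOPAux

theorem stmt19 [Fintype V] (T : SimpleGraph V) (hT : T.IsTree) (r v : V)
    (hchild : ∃ u : V, T.Adj v u ∧ InSubtree T r v u) :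
    rhoL (subtree T r v) v =
      sSup {n | ∃ u : V, (T.Adj v u ∧ InSubtree T r v u) ∧
        n = max (rhoC (subtree T r u) u) (rhoPP (subtree T r u) u) + 1 +
          ∑ᶠ w ∈ {w : V | (T.Adj v w ∧ InSubtree T r v w) ∧ w ≠ u},
            rhoP (subtree T r w) w} := by
  classical
  apply le_antisymm
  · apply csSup_le'
    rintro n ⟨S, hS, hdeg, rfl⟩
    obtain ⟨u, hu, hle⟩ := EOPAux.ub hT hS hdeg
    refine hle.trans (le_csSup ?_ ⟨u, hu, rfl⟩)
    apply Set.Finite.bddAbove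
    apply Set.Finite.subset (Set.finite_range (fun u : V =>
      max (rhoC (subtree T r u) u) (rhoPP (subtree T r u) u) + 1 +
        ∑ᶠ w ∈ {w : V | (T.Adj v w ∧ InSubtree T r v w) ∧ w ≠ u},
          rhoP (subtree T r w) w))
    rintro n ⟨u', -, rfl⟩
    exact ⟨u', rfl⟩
  · apply csSup_le'
    rintro n ⟨u, hu, rfl⟩
    obtain ⟨S, h1, h2, h3⟩ := EOPAux.lb hT hu
    rw [← h3]
    exact le_csSup (EOPAux.bddAbove_ncards _ (by rintro m ⟨S', -, -, hm⟩; exact ⟨S', hm⟩))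
      ⟨S, h1, h2, rfl⟩
end
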